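/- Let X be a subset of ω^{<ω} such that every infinite extension of X is closed and discrete in ω^ω (with the product topology). Then for every σ ∈ ω^ω there exists m ∈ ω such that the set of elements of X comparable with σ|m is finite. -/

import Mathlib

/-- The initial segment `σ|n` of an infinite sequence `σ ∈ ω^ω`. -/
def initSeg (σ : ℕ → ℕ) (n : ℕ) : List ℕ :=
  (List.range n).map σ

/-- `σ ∈ ω^ω` extends the finite sequence `s` (written `σ ⊐ s`). -/
def SeqExtends (σ : ℕ → ℕ) (s : List ℕ) : Prop :=
  initSeg σ s.length = s

/-- Two finite sequences are comparable if one is an initial segment of the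
other. -/
def Compat (s t : List ℕ) : Prop :=
  s <+: t ∨ t <+: s

/-- `A ⊆ ω^ω` is an infinite extension of `B ⊆ ω^{<ω}`: there is a bijection
`φ : B → A` with `φ(s) ⊐ s` for every `s ∈ B`. -/
def IsInfExtension (A : Set (ℕ → ℕ)) (B : Set (List ℕ)) : Prop :=
  ∃ φ : List ℕ → (ℕ → ℕ), Set.BijOn φ B A ∧ ∀ s ∈ B, SeqExtends (φ s) s

lemma initSeg_length (σ : ℕ → ℕ) (n : ℕ) : (initSeg σ n).length = n := by
  simp [initSeg]

lemma initSeg_getElem (σ : ℕ → ℕ) (n k : ℕ) (hk : k < (initSeg σ n).length) :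
    (initSeg σ n)[k] = σ k := by
  simp [initSeg]

/-- The set of prefixes of a list is finite. -/
lemma finite_prefixes (L : List ℕ) : {s : List ℕ | s <+: L}.Finite := by
  apply Set.Finite.subset (Set.finite_range fun k : Fin (L.length + 1) => L.take k)
  intro s hs
  rcases hs with ⟨t, rfl⟩
  exact ⟨⟨s.length, by simp⟩, by simp⟩

/-- In a product of topological spaces indexed by `ℕ`, every open set containing
`σ` contains a cylinder around `σ`. -/
lemma exists_cylinder {O : Set (ℕ → ℕ)} (hO : IsOpen O) {σ : ℕ → ℕ} (hσ : σ ∈ O) :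
    ∃ m : ℕ, ∀ τ : ℕ → ℕ, (∀ n < m, τ n = σ n) → τ ∈ O := by
  obtain ⟨I, u, hu, hsub⟩ := isOpen_pi_iff.mp hO σ hσ
  refine ⟨I.sup id + 1, fun τ hτ => hsub ?_⟩
  intro i hi
  have : i < I.sup id + 1 := Nat.lt_succ_of_le (Finset.le_sup (f := id) hi)
  rw [hτ i this]
  exact (hu i hi).2

/-- If every infinite extension of `X ⊆ ω^{<ω}` is closed and discrete in `ω^ω`
(with the product topology), then for every `σ ∈ ω^ω` there is `m ∈ ω` such
that only finitely many elements of `X` are comparable with `σ|m`. -/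
theorem finitely_many_compatible_of_infExtensions_closed_discrete (X : Set (List ℕ))
    (h : ∀ A : Set (ℕ → ℕ), IsInfExtension A X → IsClosed A ∧ DiscreteTopology A) :
    ∀ σ : ℕ → ℕ, ∃ m : ℕ, {s ∈ X | Compat s (initSeg σ m)}.Finite := by
  intro σ
  by_contra hcon
  push_neg at hcon
  -- for every `m` there is `s ∈ X` properly extending `σ|m`
  have key : ∀ m : ℕ, ∃ s ∈ X, initSeg σ m <+: s := by
    intro m
    have hinf : {s ∈ X | Compat s (initSeg σ m)}.Infinite := hcon m
    have hne := (hinf.diff (finite_prefixes (initSeg σ m))).nonempty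
    obtain ⟨s, ⟨⟨hsX, hcomp⟩, hnpre⟩⟩ := hne
    exact ⟨s, hsX, hcomp.resolve_left hnpre⟩
  -- the extension map
  set φ : List ℕ → (ℕ → ℕ) := fun s n =>
    if hn : n < s.length then s[n] else if n = s.length then σ n + 1 else σ n with hφ
  have hφ_lt : ∀ s n (hn : n < s.length), φ s n = s[n] := by
    intro s n hn; simp [hφ, hn]
  have hφ_len : ∀ s : List ℕ, φ s s.length = σ s.length + 1 := by
    intro s; simp [hφ]
  have hφ_gt : ∀ s n, s.length < n → φ s n = σ n := by
    intro s n hn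
    simp [hφ, Nat.lt_asymm hn, Nat.ne_of_gt hn]
  -- φ is injective
  have hφ_inj : Function.Injective φ := by
    intro s t hst
    have hlen : s.length = t.length := by
      by_contra hne
      rcases Nat.lt_or_ge s.length t.length with hl | hl
      · have h1 : φ s t.length = σ t.length := hφ_gt s t.length hl
        have h2 : φ t t.length = σ t.length + 1 := hφ_len t
        rw [hst] at h1; omega
      · have hl' : t.length < s.length := lt_of_le_of_ne hl (fun e => hne e.symm)
        have h1 : φ t s.length = σ s.length := hφ_gt t s.length hl'
        have h2 : φ s s.length = σ s.length + 1 := hφ_len s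
        rw [hst] at h2; omega
    apply List.ext_getElem hlen
    intro n h1 h2
    have := hφ_lt s n h1
    rw [hst, hφ_lt t n h2] at this
    exact this.symm
  -- A is an infinite extension of X
  have hext : IsInfExtension (φ '' X) X := by
    refine ⟨φ, (hφ_inj.injOn).bijOn_image, fun s _ => ?_⟩
    apply List.ext_getElem (initSeg_length _ _)
    intro n h1 h2
    rw [initSeg_getElem]
    exact hφ_lt s n h2
  have hclosed : IsClosed (φ '' X) := (h _ hext).1
  -- σ is not in the image
  have hσ_not : σ ∉ φ '' X := by
    rintro ⟨s, _, hs⟩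
    have := hφ_len s
    rw [hs] at this; omega
  -- but σ is in the closure
  have hσ_cl : σ ∈ closure (φ '' X) := by
    rw [mem_closure_iff]
    intro O hO hσO
    obtain ⟨m, hm⟩ := exists_cylinder hO hσO
    obtain ⟨s, hsX, hpre⟩ := key m
    refine ⟨φ s, hm _ ?_, ⟨s, hsX, rfl⟩⟩
    intro n hn
    have hn' : n < s.length := by
      have := hpre.length_le
      rw [initSeg_length] at this; omega
    rw [hφ_lt s n hn']
    have hn'' : n < (initSeg σ m).length := by rw [initSeg_length]; exact hn
    have := hpre.getElem hn''
    rw [initSeg_getElem] at this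
    exact this.symm
  rw [hclosed.closure_eq] at hσ_cl
  exact hσ_not hσ_cl
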